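/- arXiv:0810.2758 — 2 statements merged into one kernel-verified Lean document; each statement's English description precedes it below -/
import Mathlib

section
/- For γ > 0 and natural numbers α, n: ∫₀^∞ x^{γ−1} Lₙ^α(x) e^{−x} dx = Γ(γ) Γ(1+α−γ+n) / (n! Γ(1+α−γ)), where Lₙ^α(x) = Σ_{l=0}^{n} (−1)^l C(n+α, n−l) x^l / l! is the associated Laguerre polynomial. -/
open Finset

noncomputable def gb (x : ℝ) (l : ℕ) : ℝ := (∏ j ∈ Finset.range l, (x - j)) / l.factorial

lemma gb_zero (x : ℝ) : gb x 0 = 1 := by simp [gb]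

lemma gb_pascal (x : ℝ) (l : ℕ) : gb (x + 1) (l + 1) = gb x (l + 1) + gb x l := by
  have h1 : ∏ j ∈ Finset.range (l + 1), (x + 1 - (j : ℝ)) =
      (∏ j ∈ Finset.range l, (x - j)) * (x + 1) := by
    rw [Finset.prod_range_succ' (fun j => x + 1 - (j : ℝ))]
    push_cast
    congr 1
    · exact Finset.prod_congr rfl fun j _ => by ring
    · ring
  have h2 : ∏ j ∈ Finset.range (l + 1), (x - (j : ℝ)) =
      (∏ j ∈ Finset.range l, (x - j)) * (x - l) := Finset.prod_range_succ _ _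
  have hf : ((l + 1).factorial : ℝ) = (l + 1) * l.factorial := by
    rw [Nat.factorial_succ]; push_cast; ring
  have hl : (l.factorial : ℝ) ≠ 0 := by positivity
  have hl1 : ((l : ℝ) + 1) ≠ 0 := by positivity
  simp only [gb, h1, h2, hf]
  field_simp
  ring

lemma gb_nat (m l : ℕ) : gb (m : ℝ) l = Nat.choose m l := by
  induction m generalizing l with
  | zero =>
    cases l with
    | zero => simp [gb]
    | succ k =>
      simp only [gb]
      rw [Finset.prod_eq_zero (Finset.mem_range.mpr (Nat.succ_pos k))]
      · simp
      · simp
  | succ m ih =>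
    cases l with
    | zero => simp [gb]
    | succ k =>
      have : ((m : ℝ) + 1) = (m : ℝ) + 1 := rfl
      push_cast
      rw [gb_pascal, ih, ih, Nat.choose_succ_succ]
      push_cast
      ring

lemma gb_vandermonde (m : ℕ) (x : ℝ) (n : ℕ) :
    ∑ k ∈ Finset.range (n + 1), (Nat.choose m k : ℝ) * gb x (n - k) = gb (x + m) n := by
  induction m generalizing n with
  | zero =>
    rw [Finset.sum_eq_single 0]
    · simp
    · intro k _ hk
      rw [Nat.choose_eq_zero_of_lt (Nat.pos_of_ne_zero hk)]
      simp
    · intro h; exact absurd (Finset.mem_range.mpr (Nat.succ_pos n)) h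
  | succ m ih =>
    have key : ∑ k ∈ Finset.range (n + 1), (Nat.choose (m + 1) k : ℝ) * gb x (n - k) =
        (∑ k ∈ Finset.range n, (Nat.choose m k : ℝ) * gb x (n - 1 - k)) +
        ∑ k ∈ Finset.range (n + 1), (Nat.choose m k : ℝ) * gb x (n - k) := by
      rw [Finset.sum_range_succ' (fun k => (Nat.choose (m + 1) k : ℝ) * gb x (n - k))]
      rw [Finset.sum_range_succ' (fun k => (Nat.choose m k : ℝ) * gb x (n - k))]
      simp only [Nat.choose_succ_succ, Nat.choose_zero_right, Nat.cast_one, one_mul,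
        Nat.sub_zero, Nat.cast_add, Nat.succ_eq_add_one]
      have hk : ∀ k ∈ Finset.range n,
          ((Nat.choose m k : ℝ) + (Nat.choose m (k + 1) : ℝ)) * gb x (n - (k + 1)) =
          (Nat.choose m k : ℝ) * gb x (n - 1 - k) +
            (Nat.choose m (k + 1) : ℝ) * gb x (n - (k + 1)) := by
        intro k _
        have e : n - (k + 1) = n - 1 - k := by omega
        rw [e]; ring
      rw [Finset.sum_congr rfl hk, Finset.sum_add_distrib]
      ring
    rw [key]
    cases n with
    | zero =>
      simp [gb]
    | succ p =>
      have h1 : ∑ k ∈ Finset.range (p + 1), (Nat.choose m k : ℝ) * gb x (p + 1 - 1 - k) =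
          gb (x + m) p := by
        simpa using ih p
      rw [h1, ih (p + 1)]
      have : x + ((m : ℝ) + 1) = (x + m) + 1 := by ring
      push_cast
      rw [this, gb_pascal]
      ring

lemma laguerre_sum (n α : ℕ) (γ : ℝ) :
    ∑ l ∈ Finset.range (n + 1),
      (-1 : ℝ) ^ l * (Nat.choose (n + α) (n - l) : ℝ) *
        (∏ j ∈ Finset.range l, (γ + j)) / (Nat.factorial l : ℝ) =
    (∏ j ∈ Finset.range n, (1 + (α : ℝ) - γ + (j : ℝ))) / (Nat.factorial n : ℝ) := by
  have hterm : ∀ l : ℕ, (-1 : ℝ) ^ l * (Nat.choose (n + α) (n - l) : ℝ) *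
      (∏ j ∈ Finset.range l, (γ + j)) / (Nat.factorial l : ℝ) =
      (Nat.choose (n + α) (n - l) : ℝ) * gb (-γ) l := by
    intro l
    have : ∏ j ∈ Finset.range l, (-γ - (j : ℝ)) =
        (-1 : ℝ) ^ l * ∏ j ∈ Finset.range l, (γ + j) := by
      induction l with
      | zero => simp
      | succ k ih => rw [Finset.prod_range_succ, ih, Finset.prod_range_succ]; push_cast; ring
    simp only [gb, this]
    ring
  simp only [hterm]
  have hrefl : ∑ l ∈ Finset.range (n + 1), (Nat.choose (n + α) (n - l) : ℝ) * gb (-γ) l =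
      ∑ k ∈ Finset.range (n + 1), (Nat.choose (n + α) k : ℝ) * gb (-γ) (n - k) := by
    rw [← Finset.sum_range_reflect (fun k => (Nat.choose (n + α) k : ℝ) * gb (-γ) (n - k)) (n + 1)]
    apply Finset.sum_congr rfl
    intro l hl
    have hl' : l ≤ n := by simpa [Nat.lt_succ_iff] using hl
    have h1 : n + 1 - 1 - l = n - l := by omega
    have h2 : n - (n - l) = l := by omega
    rw [h1, h2]
  rw [hrefl, gb_vandermonde]
  simp only [gb]
  congr 1
  rw [← Finset.prod_range_reflect (fun j => (1 + (α : ℝ) - γ + (j : ℝ))) n]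
  apply Finset.prod_congr rfl
  intro j hj
  have hj' : j < n := Finset.mem_range.mp hj
  have : ((n - 1 - j : ℕ) : ℝ) = (n : ℝ) - 1 - j := by
    have : n - 1 - j = n - (1 + j) := by omega
    rw [this]
    push_cast [Nat.cast_sub (by omega : 1 + j ≤ n)]
    ring
  rw [this]
  push_cast
  ring

lemma Gamma_add_nat (γ : ℝ) (hγ : 0 < γ) (l : ℕ) :
    Real.Gamma (γ + l) = Real.Gamma γ * ∏ j ∈ Finset.range l, (γ + j) := by
  induction l with
  | zero => simp
  | succ k ih =>
    have h : γ + (k + 1 : ℕ) = (γ + k) + 1 := by push_cast; ring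
    rw [h, Real.Gamma_add_one (by positivity), ih, Finset.prod_range_succ]
    ring

/-- the Laguerre integral
`∫₀^∞ x^{γ−1} Lₙ^α(x) e^{−x} dx = Γ(γ) Γ(1+α−γ+n)/(n! Γ(1+α−γ))`, where the ratio of
Gamma functions is expressed as the product `∏_{j=0}^{n−1} (1+α−γ+j)` to avoid poles. -/
theorem stmt9 (γ : ℝ) (hγ : 0 < γ) (α n : ℕ) :
    (∫ x in Set.Ioi (0 : ℝ), x ^ (γ - 1) *
        (∑ l ∈ Finset.range (n + 1),
          (-1 : ℝ) ^ l * (Nat.choose (n + α) (n - l) : ℝ) * x ^ l / (Nat.factorial l : ℝ)) *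
        Real.exp (-x)) =
      Real.Gamma γ * (∏ j ∈ Finset.range n, (1 + (α : ℝ) - γ + (j : ℝ))) /
        (Nat.factorial n : ℝ) := by
  set c : ℕ → ℝ := fun l => (-1 : ℝ) ^ l * (Nat.choose (n + α) (n - l) : ℝ) / (Nat.factorial l : ℝ)
    with hc
  have hint : ∀ l : ℕ, MeasureTheory.IntegrableOn
      (fun x : ℝ => c l * (Real.exp (-x) * x ^ (γ + l - 1))) (Set.Ioi 0) :=
    fun l => (Real.GammaIntegral_convergent (by positivity : (0:ℝ) < γ + l)).const_mul _
  have hcongr : ∀ x ∈ Set.Ioi (0 : ℝ),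
      x ^ (γ - 1) *
        (∑ l ∈ Finset.range (n + 1),
          (-1 : ℝ) ^ l * (Nat.choose (n + α) (n - l) : ℝ) * x ^ l / (Nat.factorial l : ℝ)) *
        Real.exp (-x) =
      ∑ l ∈ Finset.range (n + 1), c l * (Real.exp (-x) * x ^ (γ + l - 1)) := by
    intro x hx
    have hx' : (0 : ℝ) < x := hx
    rw [Finset.mul_sum, Finset.sum_mul]
    apply Finset.sum_congr rfl
    intro l _
    have hxpow : x ^ (γ + l - 1) = x ^ (γ - 1) * x ^ (l : ℕ) := by
      rw [← Real.rpow_natCast x l, ← Real.rpow_add hx']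
      ring_nf
    rw [hxpow, hc]
    ring
  rw [MeasureTheory.setIntegral_congr_fun measurableSet_Ioi hcongr,
    MeasureTheory.integral_finset_sum _ (fun l _ => hint l)]
  have hGamma : ∀ l : ℕ, ∫ x in Set.Ioi (0:ℝ), c l * (Real.exp (-x) * x ^ (γ + l - 1)) =
      c l * Real.Gamma (γ + l) := by
    intro l
    rw [MeasureTheory.integral_const_mul, ← Real.Gamma_eq_integral (by positivity : (0:ℝ) < γ + l)]
  simp only [hGamma, Gamma_add_nat γ hγ]
  have : ∑ l ∈ Finset.range (n + 1), c l * (Real.Gamma γ * ∏ j ∈ Finset.range l, (γ + j)) =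
      Real.Gamma γ * ∑ l ∈ Finset.range (n + 1),
        (-1 : ℝ) ^ l * (Nat.choose (n + α) (n - l) : ℝ) *
          (∏ j ∈ Finset.range l, (γ + j)) / (Nat.factorial l : ℝ) := by
    rw [Finset.mul_sum]
    apply Finset.sum_congr rfl
    intro l _
    rw [hc]
    ring
  rw [this, laguerre_sum]
  ring
end

section
/- Let E be a normalized POVM on the circle 𝕋 with values in L(H), H = ℓ²(ℕ), covariant under the number representation U(t)|n⟩ = tⁿ|n⟩ (i.e. U(t)E(X)U(t)* = E(tX)). Then for all m, n ∈ ℕ, the matrix element function X ↦ ⟨m, E(X) n⟩ equals c_{m,n} ∫_X t^{m−n} dt for some constant c_{m,n} ∈ ℂ with c_{n,n} = 1, where dt is normalized Haar measure on 𝕋. -/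
open MeasureTheory ContinuousLinearMap
open scoped InnerProductSpace

/-- Phase Theorem: a normalized POVM on the circle which is covariant
under the number representation `U(t)|n⟩ = tⁿ|n⟩` has matrix elements
`⟨m, E(X) n⟩ = c_{m,n} ∫_X t^{m−n} dt` with `c_{n,n} = 1`, where `dt` is the
normalized Haar measure on the circle. -/
theorem stmt18 [MeasurableSpace Circle] [BorelSpace Circle]
    (μ : Measure Circle) [μ.IsHaarMeasure] [IsProbabilityMeasure μ]
    {H : Type*} [NormedAddCommGroup H] [InnerProductSpace ℂ H] [CompleteSpace H]
    (e : HilbertBasis ℕ ℂ H)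
    (U : Circle → H →L[ℂ] H)
    (hU : ∀ (t : Circle) (n : ℕ), U t (e n) = ((t : ℂ) ^ n) • e n)
    (E : Set Circle → (H →L[ℂ] H))
    (hnorm : E Set.univ = 1)
    (hpos : ∀ X : Set Circle, MeasurableSet X → (E X).IsPositive)
    (hadd : ∀ (ψ : H) (f : ℕ → Set Circle), (∀ i, MeasurableSet (f i)) →
      Pairwise (Function.onFun Disjoint f) →
      HasSum (fun i => ⟪ψ, E (f i) ψ⟫_ℂ) ⟪ψ, E (⋃ i, f i) ψ⟫_ℂ)
    (hcov : ∀ (t : Circle) (X : Set Circle), MeasurableSet X →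
      U t ∘L E X ∘L (ContinuousLinearMap.adjoint (U t)) = E ((fun s => t * s) '' X)) :
    ∃ c : ℕ → ℕ → ℂ, (∀ n, c n n = 1) ∧
      ∀ (m n : ℕ) (X : Set Circle), MeasurableSet X →
        ⟪(e m : H), E X (e n)⟫_ℂ =
          c m n * ∫ t in X, ((t : ℂ) ^ ((m : ℤ) - (n : ℤ))) ∂μ := by
  classical
  -- ## Basis facts
  have hext : ∀ x y : H, (∀ j, ⟪(e j : H), x⟫_ℂ = ⟪(e j : H), y⟫_ℂ) → x = y := by
    intro x y h
    apply e.repr.injective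
    ext j
    rw [e.repr_apply_apply, e.repr_apply_apply, h j]
  have hon : ∀ j k : ℕ, ⟪(e j : H), (e k : H)⟫_ℂ = if j = k then 1 else 0 :=
    orthonormal_iff_ite.mp e.orthonormal
  have hadjU : ∀ (t : Circle) (k : ℕ),
      adjoint (U t) (e k) = ((starRingEnd ℂ) ((t:ℂ)^k)) • e k := by
    intro t k
    apply hext
    intro j
    rw [adjoint_inner_right, hU, inner_smul_left, inner_smul_right, hon]
    by_cases h : j = k
    · subst h; simp
    · simp [h]
  -- ## Quasi-invariance (covariance on matrix elements)
  have hqi : ∀ (m n : ℕ) (t : Circle) (X : Set Circle), MeasurableSet X →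
      ⟪(e m : H), E ((fun s => t * s) '' X) (e n)⟫_ℂ
        = (t:ℂ) ^ ((m:ℤ) - (n:ℤ)) * ⟪(e m : H), E X (e n)⟫_ℂ := by
    intro m n t X hX
    rw [← hcov t X hX]
    have h0 : (U t ∘L E X ∘L adjoint (U t)) (e n)
        = U t (E X ((((starRingEnd ℂ) ((t:ℂ)^n))) • e n)) := by
      simp [hadjU]
    rw [h0, ← adjoint_inner_left (U t), hadjU, inner_smul_left]
    simp only [_root_.map_smul, inner_smul_right]
    have htne : (t:ℂ) ≠ 0 := Circle.coe_ne_zero t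
    have h1 : (starRingEnd ℂ) ((starRingEnd ℂ) ((t:ℂ)^m)) = (t:ℂ)^m := Complex.conj_conj _
    have h2 : (starRingEnd ℂ) ((t:ℂ)^n) = ((t:ℂ)^n)⁻¹ := by
      rw [map_pow, ← Circle.coe_inv_eq_conj, Circle.coe_inv, inv_pow]
    rw [h1, h2, zpow_sub₀ htne, zpow_natCast, zpow_natCast, div_eq_mul_inv]
    ring
  -- ## Positivity: the diagonal matrix elements are real and nonnegative
  have hre : ∀ (ψ : H) (X : Set Circle), MeasurableSet X →
      ⟪ψ, E X ψ⟫_ℂ = (((⟪ψ, E X ψ⟫_ℂ).re : ℝ) : ℂ) := by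
    intro ψ X hX
    have h1 : adjoint (E X) = E X := (hpos X hX).isSelfAdjoint
    have h2 : (starRingEnd ℂ) ⟪ψ, E X ψ⟫_ℂ = ⟪ψ, E X ψ⟫_ℂ :=
      calc (starRingEnd ℂ) ⟪ψ, E X ψ⟫_ℂ = ⟪E X ψ, ψ⟫_ℂ := by rw [inner_conj_symm]
      _ = ⟪adjoint (E X) ψ, ψ⟫_ℂ := by rw [h1]
      _ = ⟪ψ, E X ψ⟫_ℂ := adjoint_inner_left _ ψ ψ
    exact (Complex.conj_eq_iff_re.mp h2).symm
  have hnn : ∀ (ψ : H) (X : Set Circle), MeasurableSet X → 0 ≤ (⟪ψ, E X ψ⟫_ℂ).re :=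
    fun ψ X hX => by simpa using (Complex.le_def.mp ((hpos X hX).inner_nonneg_right ψ)).1
  have hempty : ∀ ψ : H, ⟪ψ, E (∅ : Set Circle) ψ⟫_ℂ = 0 := by
    intro ψ
    have h := hadd ψ (fun _ => ∅) (fun _ => MeasurableSet.empty)
      (fun i j _ => by simp [Function.onFun])
    rw [Set.iUnion_empty] at h
    exact tendsto_nhds_unique tendsto_const_nhds h.summable.tendsto_atTop_zero
  -- ## The diagonal measures
  let M : H → Measure Circle := fun ψ => Measure.ofMeasurable
    (fun X _ => ENNReal.ofReal ((⟪ψ, E X ψ⟫_ℂ).re))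
    (by show ENNReal.ofReal ((⟪ψ, E (∅ : Set Circle) ψ⟫_ℂ).re) = 0
        rw [hempty ψ]; simp)
    (by intro f hf hdisj
        show ENNReal.ofReal ((⟪ψ, E (⋃ i, f i) ψ⟫_ℂ).re)
          = ∑' i, ENNReal.ofReal ((⟪ψ, E (f i) ψ⟫_ℂ).re)
        have hr := Complex.hasSum_re (hadd ψ f hf hdisj)
        rw [← hr.tsum_eq]
        exact ENNReal.ofReal_tsum_of_nonneg (fun i => hnn ψ (f i) (hf i)) hr.summable)
  have hMapp : ∀ (ψ : H) (X : Set Circle) (hX : MeasurableSet X),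
      M ψ X = ENNReal.ofReal ((⟪ψ, E X ψ⟫_ℂ).re) :=
    fun ψ X hX => Measure.ofMeasurable_apply X hX
  have hMfin : ∀ ψ : H, IsFiniteMeasure (M ψ) := fun ψ =>
    ⟨by rw [hMapp ψ _ MeasurableSet.univ]; exact ENNReal.ofReal_lt_top⟩
  have hMC : ∀ (ψ : H) (X : Set Circle), MeasurableSet X →
      ⟪ψ, E X ψ⟫_ℂ = (((M ψ X).toReal : ℝ) : ℂ) := by
    intro ψ X hX
    rw [hMapp ψ X hX, ENNReal.toReal_ofReal (hnn ψ X hX)]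
    exact hre ψ X hX
  have hq : ∀ (ψ : H) (X : Set Circle), MeasurableSet X →
      ⟪E X ψ, ψ⟫_ℂ = (((M ψ X).toReal : ℝ) : ℂ) := by
    intro ψ X hX
    rw [← inner_conj_symm, hMC ψ X hX, Complex.conj_ofReal]
  -- ## Polarization
  have hpol : ∀ (m n : ℕ) (X : Set Circle), MeasurableSet X →
      ⟪(e m : H), E X (e n)⟫_ℂ =
        (((M ((e m : H) + e n) X).toReal : ℂ) - ((M ((e m : H) - e n) X).toReal : ℂ)
          - Complex.I * ((M ((e m : H) + Complex.I • e n) X).toReal : ℂ)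
          + Complex.I * ((M ((e m : H) - Complex.I • e n) X).toReal : ℂ)) / 4 := by
    intro m n X hX
    have h := inner_map_polarization ((E X : H →ₗ[ℂ] H)) (e m) (e n)
    simp only [ContinuousLinearMap.coe_coe] at h
    have h2 : ⟪(e m : H), E X (e n)⟫_ℂ = (starRingEnd ℂ) ⟪E X (e n), (e m : H)⟫_ℂ :=
      (inner_conj_symm _ _).symm
    rw [h2, h, hq _ _ hX, hq _ _ hX, hq _ _ hX, hq _ _ hX]
    simp only [map_div₀, map_sub, map_add, map_mul, Complex.conj_I, Complex.conj_ofReal,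
      map_ofNat]
    ring
  -- ## measurability of characters
  have hchim : ∀ d : ℤ, Measurable (fun s : Circle => (s:ℂ)^d) := fun d =>
    ((show Continuous fun s : Circle => (s:ℂ) from continuous_subtype_val).zpow₀ d
      (fun x => Or.inl (Circle.coe_ne_zero x))).measurable
  have hchinorm : ∀ (d : ℤ) (s : Circle), ‖(s:ℂ)^d‖ = 1 := by
    intro d s
    rw [norm_zpow]
    have : ‖(s:ℂ)‖ = 1 := by exact Circle.norm_coe s
    rw [this, one_zpow]
  -- ## The key averaging identity
  have hkey : ∀ (ρ : Measure Circle), IsFiniteMeasure ρ → ∀ (d : ℤ) (X : Set Circle),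
      MeasurableSet X →
      ∫ s : Circle, (s:ℂ)^d * ((ρ ((fun v => s * v) ⁻¹' X)).toReal : ℂ) ∂μ
        = (∫ u : Circle, ((u:ℂ)^d)⁻¹ ∂ρ) * ∫ t in X, (t:ℂ)^d ∂μ := by
    intro ρ hρ d X hX
    haveI := hρ
    have hpre : ∀ s : Circle, MeasurableSet ((fun v => s * v) ⁻¹' X) :=
      fun s => (measurable_const_mul s) hX
    have hgnorm : ∀ t, ‖Set.indicator X (fun _ => (1:ℂ)) t‖ ≤ 1 := by
      intro t; by_cases h : t ∈ X <;> simp [Set.indicator, h]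
    have h1 : ∀ s : Circle, ((ρ ((fun v => s * v) ⁻¹' X)).toReal : ℂ) = ∫ u : Circle, Set.indicator X (fun _ => (1:ℂ)) (s * u) ∂ρ := by
      intro s
      have h2 : (fun u => Set.indicator X (fun _ => (1:ℂ)) (s * u)) = Set.indicator ((fun v => s * v) ⁻¹' X) (fun _ => (1:ℂ)) := by
        funext u
        by_cases h : s * u ∈ X
        · rw [Set.indicator_of_mem h, Set.indicator_of_mem (by exact h)]
        · rw [Set.indicator_of_notMem h, Set.indicator_of_notMem (by exact h)]
      rw [h2, integral_indicator_const (1:ℂ) (hpre s)]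
      simp [measureReal_def]
    have hstep1 : (fun s : Circle => (s:ℂ)^d * ((ρ ((fun v => s * v) ⁻¹' X)).toReal : ℂ))
        = fun s : Circle => ∫ u : Circle, (s:ℂ)^d * Set.indicator X (fun _ => (1:ℂ)) (s * u) ∂ρ := by
      funext s
      rw [h1 s, integral_const_mul]
    have hFmeas : Measurable (fun p : Circle × Circle => (p.1:ℂ)^d * Set.indicator X (fun _ => (1:ℂ)) (p.1 * p.2)) := by
      apply Measurable.mul
      · exact (hchim d).comp measurable_fst
      · exact ((measurable_const (a := (1:ℂ))).indicator hX).comp measurable_mul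
    have hFint : Integrable (Function.uncurry fun s u : Circle => (s:ℂ)^d * Set.indicator X (fun _ => (1:ℂ)) (s * u))
        (μ.prod ρ) := by
      refine ⟨hFmeas.aestronglyMeasurable,
        HasFiniteIntegral.of_bounded (C := 1) (Filter.Eventually.of_forall ?_)⟩
      rintro ⟨s, u⟩
      calc ‖(s:ℂ)^d * Set.indicator X (fun _ => (1:ℂ)) (s * u)‖ = ‖(s:ℂ)^d‖ * ‖Set.indicator X (fun _ => (1:ℂ)) (s * u)‖ := norm_mul _ _
      _ ≤ 1 * 1 := by
          rw [hchinorm d s, one_mul]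
          simpa using hgnorm (s * u)
      _ = 1 := by ring
    have hswap : ∫ s : Circle, ∫ u : Circle, (s:ℂ)^d * Set.indicator X (fun _ => (1:ℂ)) (s * u) ∂ρ ∂μ
        = ∫ u : Circle, ∫ s : Circle, (s:ℂ)^d * Set.indicator X (fun _ => (1:ℂ)) (s * u) ∂μ ∂ρ := integral_integral_swap hFint
    have hinner : ∀ u : Circle,
        ∫ s : Circle, (s:ℂ)^d * Set.indicator X (fun _ => (1:ℂ)) (s * u) ∂μ = ((u:ℂ)^d)⁻¹ * ∫ t in X, (t:ℂ)^d ∂μ := by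
      intro u
      have h3 : ∫ s : Circle, (s:ℂ)^d * Set.indicator X (fun _ => (1:ℂ)) (s * u) ∂μ
          = ∫ s : Circle, ((s * u⁻¹ : Circle):ℂ)^d * Set.indicator X (fun _ => (1:ℂ)) (s * u⁻¹ * u) ∂μ :=
        (integral_mul_right_eq_self (fun s : Circle => (s:ℂ)^d * Set.indicator X (fun _ => (1:ℂ)) (s * u)) u⁻¹).symm
      rw [h3]
      have h4 : ∀ s : Circle, ((s * u⁻¹ : Circle):ℂ)^d * Set.indicator X (fun _ => (1:ℂ)) (s * u⁻¹ * u)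
          = ((u:ℂ)^d)⁻¹ * ((s:ℂ)^d * Set.indicator X (fun _ => (1:ℂ)) s) := by
        intro s
        have h5 : s * u⁻¹ * u = s := by group
        rw [h5]
        have h6 : ((s * u⁻¹ : Circle):ℂ)^d = (s:ℂ)^d * ((u:ℂ)^d)⁻¹ := by
          rw [Circle.coe_mul, Circle.coe_inv, mul_zpow, inv_zpow]
        rw [h6]; ring
      simp only [h4]
      rw [integral_const_mul]
      congr 1
      have h7 : (fun s : Circle => (s:ℂ)^d * Set.indicator X (fun _ => (1:ℂ)) s) = Set.indicator X (fun t : Circle => (t:ℂ)^d) := by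
        funext s
        by_cases h : s ∈ X <;> simp [Set.indicator, h]
      rw [h7, integral_indicator hX]
    rw [hstep1, hswap]
    simp only [hinner]
    simp only [← smul_eq_mul]
    rw [integral_smul_const]
  -- ## Assemble
  refine ⟨fun m n =>
    ((∫ u : Circle, (((u:ℂ)^((m:ℤ)-(n:ℤ)))⁻¹) ∂(M ((e m : H) + e n)))
      - (∫ u : Circle, (((u:ℂ)^((m:ℤ)-(n:ℤ)))⁻¹) ∂(M ((e m : H) - e n)))
      - Complex.I * (∫ u : Circle, (((u:ℂ)^((m:ℤ)-(n:ℤ)))⁻¹) ∂(M ((e m : H) + Complex.I • e n)))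
      + Complex.I * (∫ u : Circle, (((u:ℂ)^((m:ℤ)-(n:ℤ)))⁻¹) ∂(M ((e m : H) - Complex.I • e n)))) / 4,
    ?_, ?_⟩
  · -- c n n = 1
    intro n
    beta_reduce
    have hz : ((n:ℤ) - (n:ℤ)) = 0 := sub_self _
    have hone : ∀ ψ : H, (∫ u : Circle, (((u:ℂ)^((n:ℤ)-(n:ℤ)))⁻¹) ∂(M ψ)) = ((M ψ Set.univ).toReal : ℂ) := by
      intro ψ
      haveI := hMfin ψ
      simp [hz, measureReal_def]
    rw [hone, hone, hone, hone]
    have h := hpol n n Set.univ MeasurableSet.univ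
    rw [hnorm] at h
    simp only [ContinuousLinearMap.one_apply] at h
    rw [hon n n] at h
    simp only [if_pos rfl] at h
    exact h.symm
  · -- the matrix element formula
    intro m n X hX
    set d : ℤ := (m:ℤ) - (n:ℤ) with hd
    have hpre : ∀ s : Circle, MeasurableSet ((fun v => s * v) ⁻¹' X) :=
      fun s => (measurable_const_mul s) hX
    have hsetid : ∀ s : Circle, (fun v => s⁻¹ * v) '' X = (fun v => s * v) ⁻¹' X := by
      intro s; ext u
      constructor
      · rintro ⟨x, hx, rfl⟩
        show s * (s⁻¹ * x) ∈ X
        rwa [← mul_assoc, mul_inv_cancel, one_mul]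
      · intro hu
        exact ⟨s * u, hu, by group⟩
    have hzne : ∀ s : Circle, ((s:ℂ)^d) ≠ 0 := fun s => zpow_ne_zero d (Circle.coe_ne_zero s)
    have hinv : ∀ s : Circle, ⟪(e m : H), E ((fun v => s * v) ⁻¹' X) (e n)⟫_ℂ
        = ((s:ℂ)^d)⁻¹ * ⟪(e m : H), E X (e n)⟫_ℂ := by
      intro s
      rw [← hsetid s, hqi m n s⁻¹ X hX]
      congr 1
      rw [Circle.coe_inv, inv_zpow]
    have hmain : ⟪(e m : H), E X (e n)⟫_ℂ
        = ∫ s : Circle, (s:ℂ)^d * ⟪(e m : H), E ((fun v => s * v) ⁻¹' X) (e n)⟫_ℂ ∂μ := by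
      have h8 : ∀ s : Circle, (s:ℂ)^d * ⟪(e m : H), E ((fun v => s * v) ⁻¹' X) (e n)⟫_ℂ
          = ⟪(e m : H), E X (e n)⟫_ℂ := by
        intro s; rw [hinv s, ← mul_assoc, mul_inv_cancel₀ (hzne s), one_mul]
      simp only [h8]
      simp
    -- integrability of the four pieces
    have hrmeas : ∀ ψ : H, Measurable fun s : Circle =>
        ((M ψ ((fun v => s * v) ⁻¹' X)).toReal) := by
      intro ψ
      haveI := hMfin ψ
      exact (measurable_measure_prodMk_left (ν := M ψ)
        (measurable_mul hX : MeasurableSet ((fun p : Circle × Circle => p.1 * p.2) ⁻¹' X))).ennreal_toReal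
    have hwint : ∀ ψ : H, Integrable
        (fun s : Circle => (s:ℂ)^d * ((M ψ ((fun v => s * v) ⁻¹' X)).toReal : ℂ)) μ := by
      intro ψ
      haveI := hMfin ψ
      refine ⟨((hchim d).mul (Complex.measurable_ofReal.comp (hrmeas ψ))).aestronglyMeasurable,
        HasFiniteIntegral.of_bounded (C := (M ψ Set.univ).toReal)
          (Filter.Eventually.of_forall fun s => ?_)⟩
      rw [norm_mul, hchinorm d s, one_mul]
      have h9 : ‖(((M ψ ((fun v => s * v) ⁻¹' X)).toReal : ℝ) : ℂ)‖
          = (M ψ ((fun v => s * v) ⁻¹' X)).toReal := by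
        rw [Complex.norm_real, Real.norm_eq_abs, abs_of_nonneg ENNReal.toReal_nonneg]
      rw [h9]
      exact ENNReal.toReal_mono (measure_ne_top _ _) (measure_mono (Set.subset_univ _))
    have hIsub : Integrable (fun s : Circle =>
        (s:ℂ)^d * ((M ((e m : H) + e n) ((fun v => s * v) ⁻¹' X)).toReal : ℂ)
        - (s:ℂ)^d * ((M ((e m : H) - e n) ((fun v => s * v) ⁻¹' X)).toReal : ℂ)) μ :=
      (hwint _).sub (hwint _)
    have hIsub2 : Integrable (fun s : Circle =>
        ((s:ℂ)^d * ((M ((e m : H) + e n) ((fun v => s * v) ⁻¹' X)).toReal : ℂ)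
        - (s:ℂ)^d * ((M ((e m : H) - e n) ((fun v => s * v) ⁻¹' X)).toReal : ℂ))
        - Complex.I * ((s:ℂ)^d * ((M ((e m : H) + Complex.I • e n) ((fun v => s * v) ⁻¹' X)).toReal : ℂ))) μ :=
      hIsub.sub ((hwint _).const_mul _)
    calc ⟪(e m : H), E X (e n)⟫_ℂ
        = ∫ s : Circle, (s:ℂ)^d * ⟪(e m : H), E ((fun v => s * v) ⁻¹' X) (e n)⟫_ℂ ∂μ := hmain
    _ = ∫ s : Circle, ((s:ℂ)^d * ((M ((e m : H) + e n) ((fun v => s * v) ⁻¹' X)).toReal : ℂ)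
          - (s:ℂ)^d * ((M ((e m : H) - e n) ((fun v => s * v) ⁻¹' X)).toReal : ℂ)
          - Complex.I * ((s:ℂ)^d * ((M ((e m : H) + Complex.I • e n) ((fun v => s * v) ⁻¹' X)).toReal : ℂ))
          + Complex.I * ((s:ℂ)^d * ((M ((e m : H) - Complex.I • e n) ((fun v => s * v) ⁻¹' X)).toReal : ℂ))) / 4 ∂μ := by
        apply integral_congr_ae
        refine Filter.Eventually.of_forall fun s => ?_
        beta_reduce
        rw [hpol m n _ (hpre s)]
        ring
    _ = ((∫ s : Circle, (s:ℂ)^d * ((M ((e m : H) + e n) ((fun v => s * v) ⁻¹' X)).toReal : ℂ) ∂μ)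
          - (∫ s : Circle, (s:ℂ)^d * ((M ((e m : H) - e n) ((fun v => s * v) ⁻¹' X)).toReal : ℂ) ∂μ)
          - Complex.I * (∫ s : Circle, (s:ℂ)^d * ((M ((e m : H) + Complex.I • e n) ((fun v => s * v) ⁻¹' X)).toReal : ℂ) ∂μ)
          + Complex.I * (∫ s : Circle, (s:ℂ)^d * ((M ((e m : H) - Complex.I • e n) ((fun v => s * v) ⁻¹' X)).toReal : ℂ) ∂μ)) / 4 := by
        rw [integral_div, integral_add hIsub2 ((hwint _).const_mul _),
          integral_sub hIsub ((hwint _).const_mul _),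
          integral_sub (hwint _) (hwint _), integral_const_mul, integral_const_mul]
    _ = _ := by
        rw [hkey _ (hMfin _) d X hX, hkey _ (hMfin _) d X hX,
          hkey _ (hMfin _) d X hX, hkey _ (hMfin _) d X hX]
        ring
end
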